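/- arXiv:1202.4655 — 8 statements merged into one kernel-verified Lean document; each statement's English description precedes it below -/
import Mathlib

section
/- Let S be a finite nonempty set of positive integers with k = max S ∈ S, and define G_s : ℕ → ℤ by G_s(0) = 0 and G_s(n) = max_{j ∈ S, j ≤ n} (j - G_s(n - j)) for n > 0 (G_s(n) = 0 if no such j exists). Then for every r with 0 ≤ r ≤ k and every i ∈ ℕ, G_s(r + 2ik) ≤ r. -/
theorem stmt_2 (S : Finset ℕ) (hS : S.Nonempty) (hpos : ∀ j ∈ S, 0 < j)
    (k : ℕ) (hk : k = S.max' hS)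
    (Gs : ℕ → ℤ) (h0 : Gs 0 = 0)
    (hG : ∀ n : ℕ, 0 < n →
      Gs n = if h : (S.filter (fun j => j ≤ n)).Nonempty
        then (S.filter (fun j => j ≤ n)).sup' h (fun j => (j : ℤ) - Gs (n - j))
        else 0) (hkS : k ∈ S) :
    ∀ r : ℕ, r ≤ k → ∀ i : ℕ, Gs (r + 2 * i * k) ≤ (r : ℤ) := by
  have hk0 : 0 < k := hpos k hkS
  -- Key lemma: 0 ≤ Gs n, and Gs n is at most any nonneg bound dominating all feasible moves.
  have key : ∀ n, 0 ≤ Gs n ∧ ∀ b : ℤ, 0 ≤ b → (∀ j ∈ S, j ≤ n → (j:ℤ) ≤ b) → Gs n ≤ b := by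
    intro n
    induction n using Nat.strong_induction_on with
    | _ n ih =>
      by_cases hn : n = 0
      · subst hn; rw [h0]; exact ⟨le_refl 0, fun b hb _ => hb⟩
      · have hn' : 0 < n := Nat.pos_of_ne_zero hn
        rw [hG n hn']
        by_cases hf : (S.filter (fun j => j ≤ n)).Nonempty
        · rw [dif_pos hf]
          constructor
          · -- nonnegativity: use the max element of the filter
            set j0 := (S.filter (fun j => j ≤ n)).max' hf with hj0
            have hj0mem : j0 ∈ S.filter (fun j => j ≤ n) := (S.filter _).max'_mem hf
            have hj0S : j0 ∈ S := (Finset.mem_filter.mp hj0mem).1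
            have hj0n : j0 ≤ n := (Finset.mem_filter.mp hj0mem).2
            have hj0pos : 0 < j0 := hpos _ hj0S
            have hlt : n - j0 < n := Nat.sub_lt hn' hj0pos
            have hub := (ih _ hlt).2 (j0 : ℤ) (by positivity) (by
              intro j hjS hjle
              have hmem : j ∈ S.filter (fun j => j ≤ n) :=
                Finset.mem_filter.mpr ⟨hjS, le_trans hjle (Nat.sub_le n j0)⟩
              exact_mod_cast Finset.le_max' _ j hmem)
            calc (0:ℤ) ≤ (j0:ℤ) - Gs (n - j0) := by linarith
              _ ≤ _ := Finset.le_sup' (fun j : ℕ => (j:ℤ) - Gs (n - j)) hj0mem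
          · intro b hb hball
            apply Finset.sup'_le
            intro j hj
            obtain ⟨hjS, hjn⟩ := Finset.mem_filter.mp hj
            have hjpos := hpos j hjS
            have hlt : n - j < n := Nat.sub_lt hn' hjpos
            have h1 := (ih _ hlt).1
            have h2 := hball j hjS hjn
            linarith
        · rw [dif_neg hf]; exact ⟨le_refl 0, fun b hb _ => hb⟩
  have main : ∀ n, (∀ r, r ≤ k → ∀ i, n = r + 2*i*k → Gs n ≤ (r:ℤ)) ∧
      (∀ s, s ≤ k → ∀ i, n = s + (2*i+1)*k → (k:ℤ) - (s:ℤ) ≤ Gs n) := by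
    intro n
    induction n using Nat.strong_induction_on with
    | _ n ih =>
      constructor
      · intro r hr i hni
        by_cases hn : n = 0
        · subst hn; rw [h0]; positivity
        · have hn' : 0 < n := Nat.pos_of_ne_zero hn
          rw [hG n hn']
          by_cases hf : (S.filter (fun j => j ≤ n)).Nonempty
          · rw [dif_pos hf]
            apply Finset.sup'_le
            intro j hj
            obtain ⟨hjS, hjn⟩ := Finset.mem_filter.mp hj
            have hjk : j ≤ k := by rw [hk]; exact Finset.le_max' S j hjS
            have hjpos := hpos j hjS
            have hlt : n - j < n := Nat.sub_lt hn' hjpos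
            by_cases hjr : j ≤ r
            · have hnn := (key (n - j)).1
              have : (j:ℤ) ≤ (r:ℤ) := by exact_mod_cast hjr
              linarith
            · push_neg at hjr
              -- i ≥ 1
              rcases i with _ | i'
              · exfalso; simp at hni; omega
              · obtain ⟨m, hm⟩ : ∃ m, i' * k = m := ⟨_, rfl⟩
                have e1 : n = r + 2*m + 2*k := by rw [hni, ← hm]; ring
                have e2 : (2*i'+1)*k = 2*m + k := by rw [← hm]; ring
                have hsub : n - j = (r + k - j) + (2*i'+1)*k := by rw [e2]; omega
                have hsk : r + k - j ≤ k := by omega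
                have hB := (ih (n - j) hlt).2 (r + k - j) hsk i' hsub
                have hcast : ((r + k - j : ℕ) : ℤ) = (r:ℤ) + (k:ℤ) - (j:ℤ) := by omega
                rw [hcast] at hB
                linarith
          · rw [dif_neg hf]; positivity
      · intro s hs i hni
        obtain ⟨m, hm⟩ : ∃ m, i * k = m := ⟨_, rfl⟩
        have e1 : n = s + 2*m + k := by rw [hni, ← hm]; ring
        have hn' : 0 < n := by omega
        rw [hG n hn']
        have hkn : k ≤ n := by omega
        have hkf : k ∈ S.filter (fun j => j ≤ n) := Finset.mem_filter.mpr ⟨hkS, hkn⟩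
        have hf : (S.filter (fun j => j ≤ n)).Nonempty := ⟨k, hkf⟩
        rw [dif_pos hf]
        have hsub : n - k = s + 2*i*k := by
          have e3 : 2*i*k = 2*m := by rw [← hm]; ring
          rw [e3]; omega
        have hA := (ih (n - k) (Nat.sub_lt hn' hk0)).1 s hs i hsub
        calc (k:ℤ) - (s:ℤ) ≤ (k:ℤ) - Gs (n - k) := by linarith
          _ ≤ _ := Finset.le_sup' (fun j : ℕ => (j:ℤ) - Gs (n - j)) hkf
  intro r hr i
  exact (main (r + 2*i*k)).1 r hr i rfl
end

section
/- Let S be a finite nonempty set of positive integers with k = max S ∈ S, and define G_s : ℕ → ℤ by G_s(0) = 0 and G_s(n) = max_{j ∈ S, j ≤ n} (j - G_s(n - j)) for n > 0 (G_s(n) = 0 if no such j exists). Then for every r with 0 ≤ r ≤ k and every i ∈ ℕ, G_s(r + (2i + 1)k) ≥ k - r. -/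
theorem stmt_3 (S : Finset ℕ) (hS : S.Nonempty) (hpos : ∀ j ∈ S, 0 < j)
    (k : ℕ) (hk : k = S.max' hS)
    (Gs : ℕ → ℤ) (h0 : Gs 0 = 0)
    (hG : ∀ n : ℕ, 0 < n →
      Gs n = if h : (S.filter (fun j => j ≤ n)).Nonempty
        then (S.filter (fun j => j ≤ n)).sup' h (fun j => (j : ℤ) - Gs (n - j))
        else 0) (hkS : k ∈ S) :
    ∀ r : ℕ, r ≤ k → ∀ i : ℕ, Gs (r + (2 * i + 1) * k) ≥ (k : ℤ) - (r : ℤ) := by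
  have hk0 : 0 < k := hpos k hkS
  -- auxiliary: Gs n is nonnegative, and bounded by any bound on feasible moves
  have aux : ∀ n : ℕ, 0 ≤ Gs n ∧ ∀ m : ℕ, (∀ j ∈ S, j ≤ n → j ≤ m) → Gs n ≤ (m : ℤ) := by
    intro n
    induction n using Nat.strong_induction_on with
    | _ n ih =>
      rcases Nat.eq_zero_or_pos n with rfl | hn
      · exact ⟨by simp [h0], fun m _ => by simp [h0]⟩
      have upper : ∀ m : ℕ, (∀ j ∈ S, j ≤ n → j ≤ m) → Gs n ≤ (m : ℤ) := by
        intro m hm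
        rw [hG n hn]
        split_ifs with h
        · apply Finset.sup'_le
          intro j hjmem
          have hjS : j ∈ S := (Finset.mem_filter.mp hjmem).1
          have hjn : j ≤ n := (Finset.mem_filter.mp hjmem).2
          have hjpos := hpos j hjS
          have hnn := (ih (n - j) (by omega)).1
          have hjm : (j : ℤ) ≤ (m : ℤ) := by exact_mod_cast hm j hjS hjn
          linarith
        · positivity
      refine ⟨?_, upper⟩
      rw [hG n hn]
      split_ifs with h
      · set j := (S.filter (fun j => j ≤ n)).max' h with hj
        have hjmem : j ∈ S.filter (fun j => j ≤ n) := Finset.max'_mem _ h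
        have hjS : j ∈ S := (Finset.mem_filter.mp hjmem).1
        have hjn : j ≤ n := (Finset.mem_filter.mp hjmem).2
        have hjpos : 0 < j := hpos j hjS
        have h1 : (j : ℤ) - Gs (n - j) ≤
            (S.filter (fun j => j ≤ n)).sup' h (fun j => (j : ℤ) - Gs (n - j)) :=
          Finset.le_sup' (fun (j : ℕ) => (j : ℤ) - Gs (n - j)) hjmem
        have h2 : Gs (n - j) ≤ (j : ℤ) := by
          apply (ih (n - j) (by omega)).2
          intro j' hj' hle
          exact Finset.le_max' _ _ (Finset.mem_filter.mpr ⟨hj', by omega⟩)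
        linarith
      · exact le_refl 0
  have jle : ∀ j ∈ S, j ≤ k := by
    intro j hj; rw [hk]; exact Finset.le_max' _ _ hj
  -- key invariant Q i : Gs (r + 2 i k) ≤ r for r ≤ k
  have Q : ∀ i : ℕ, ∀ r : ℕ, r ≤ k → Gs (r + 2 * i * k) ≤ (r : ℤ) := by
    intro i
    induction i with
    | zero =>
      intro r hr
      simpa using (aux r).2 r (fun j _ h => h)
    | succ i ih =>
      intro r hr
      have hgoal : r + 2 * (i + 1) * k = r + 2 * i * k + k + k := by ring
      rw [hgoal]
      generalize hT : 2 * i * k = T at ih ⊢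
      -- derived lower bound for odd positions
      have Pi : ∀ r' : ℕ, r' ≤ k → Gs (r' + T + k) ≥ (k : ℤ) - (r' : ℤ) := by
        intro r' hr'
        have hn : 0 < r' + T + k := by omega
        rw [hG _ hn]
        have hkmem : k ∈ S.filter (fun j => j ≤ r' + T + k) :=
          Finset.mem_filter.mpr ⟨hkS, by omega⟩
        have hne : (S.filter (fun j => j ≤ r' + T + k)).Nonempty := ⟨k, hkmem⟩
        rw [dif_pos hne]
        have h1 : (k : ℤ) - Gs (r' + T + k - k) ≤ _ :=
          Finset.le_sup' (fun (j : ℕ) => (j : ℤ) - Gs (r' + T + k - j)) hkmem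
        have he : r' + T + k - k = r' + T := by omega
        rw [he] at h1
        have h2 := ih r' hr'
        linarith
      have hn : 0 < r + T + k + k := by omega
      rw [hG _ hn]
      have hkmem : k ∈ S.filter (fun j => j ≤ r + T + k + k) :=
        Finset.mem_filter.mpr ⟨hkS, by omega⟩
      rw [dif_pos ⟨k, hkmem⟩]
      apply Finset.sup'_le
      intro j hjmem
      have hjS : j ∈ S := (Finset.mem_filter.mp hjmem).1
      have hjk : j ≤ k := jle j hjS
      have hjpos : 0 < j := hpos j hjS
      rcases le_or_gt r j with hc | hc
      · have he : r + T + k + k - j = (r + k - j) + T + k := by omega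
        rw [he]
        have := Pi (r + k - j) (by omega)
        have hcast : ((r + k - j : ℕ) : ℤ) = (r : ℤ) + k - j := by
          push_cast [Nat.cast_sub (by omega : j ≤ r + k)]; ring
        rw [hcast] at this
        linarith
      · have hnn := (aux (r + T + k + k - j)).1
        have : (j : ℤ) < (r : ℤ) := by exact_mod_cast hc
        linarith
  intro r hr i
  have he : r + (2 * i + 1) * k = r + 2 * i * k + k := by ring
  rw [he]
  have hn : 0 < r + 2 * i * k + k := by omega
  rw [hG _ hn]
  have hkmem : k ∈ S.filter (fun j => j ≤ r + 2 * i * k + k) :=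
    Finset.mem_filter.mpr ⟨hkS, by omega⟩
  rw [dif_pos ⟨k, hkmem⟩]
  have h1 : (k : ℤ) - Gs (r + 2 * i * k + k - k) ≤ _ :=
    Finset.le_sup' (fun (j : ℕ) => (j : ℤ) - Gs (r + 2 * i * k + k - j)) hkmem
  have he2 : r + 2 * i * k + k - k = r + 2 * i * k := by omega
  rw [he2] at h1
  have h2 := Q i r hr
  linarith
end

section
/- Let S be a finite nonempty set of positive integers with k = max S ∈ S, and define G_s : ℕ → ℤ by G_s(0) = 0 and G_s(n) = max_{j ∈ S, j ≤ n} (j - G_s(n - j)) for n > 0 (G_s(n) = 0 if no such j exists). Then for every s ∈ S, G_s(s + k) = k - s. -/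
theorem stmt_5 (S : Finset ℕ) (hS : S.Nonempty) (hpos : ∀ j ∈ S, 0 < j)
    (k : ℕ) (hk : k = S.max' hS)
    (Gs : ℕ → ℤ) (h0 : Gs 0 = 0)
    (hG : ∀ n : ℕ, 0 < n →
      Gs n = if h : (S.filter (fun j => j ≤ n)).Nonempty
        then (S.filter (fun j => j ≤ n)).sup' h (fun j => (j : ℤ) - Gs (n - j))
        else 0) (hkS : k ∈ S) :
    ∀ s ∈ S, Gs (s + k) = (k : ℤ) - (s : ℤ) := by
  have move : ∀ n j : ℕ, j ∈ S → j ≤ n → (j : ℤ) - Gs (n - j) ≤ Gs n := by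
    intro n j hj hjn
    have hn : 0 < n := lt_of_lt_of_le (hpos j hj) hjn
    rw [hG n hn]
    have hmem : j ∈ S.filter (fun j => j ≤ n) := Finset.mem_filter.2 ⟨hj, hjn⟩
    rw [dif_pos ⟨j, hmem⟩]
    exact Finset.le_sup' (fun j : ℕ => (j : ℤ) - Gs (n - j)) hmem
  have key : ∀ m : ℕ, 0 ≤ Gs m ∧
      Gs m ≤ if h : (S.filter (fun j => j ≤ m)).Nonempty
        then ((S.filter (fun j => j ≤ m)).max' h : ℤ) else 0 := by
    intro m
    induction m using Nat.strong_induction_on with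
    | _ m IH =>
    rcases Nat.eq_zero_or_pos m with rfl | hm
    · have hemp : (S.filter (fun j => j ≤ 0)) = ∅ := by
        apply Finset.filter_eq_empty_iff.2
        intro j hj
        simpa using (hpos j hj).ne'
      rw [h0, hemp]
      simp
    by_cases hne : (S.filter (fun j => j ≤ m)).Nonempty
    · set t := (S.filter (fun j => j ≤ m)).max' hne with htdef
      have htmem : t ∈ S.filter (fun j => j ≤ m) := Finset.max'_mem _ hne
      obtain ⟨htS, htm⟩ := Finset.mem_filter.1 htmem
      have hGmt : Gs (m - t) ≤ (t : ℤ) := by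
        rcases Nat.eq_zero_or_pos (m - t) with hz | hpos'
        · rw [hz, h0]; exact_mod_cast Nat.zero_le t
        · have hlt : m - t < m := Nat.sub_lt hm (hpos t htS)
          have h2 := (IH _ hlt).2
          by_cases hne' : (S.filter (fun j => j ≤ m - t)).Nonempty
          · rw [dif_pos hne'] at h2
            refine h2.trans ?_
            have ht' := Finset.max'_mem _ hne'
            obtain ⟨h1', h2'⟩ := Finset.mem_filter.1 ht'
            have : (S.filter (fun j => j ≤ m - t)).max' hne' ≤ t := by
              apply Finset.le_max'
              exact Finset.mem_filter.2 ⟨h1', h2'.trans (Nat.sub_le m t)⟩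
            exact_mod_cast this
          · rw [dif_neg hne'] at h2
            exact h2.trans (by exact_mod_cast Nat.zero_le t)
      constructor
      · have := move m t htS htm
        linarith
      · rw [hG m hm, dif_pos hne, dif_pos hne]
        apply Finset.sup'_le
        intro j hj
        obtain ⟨hjS, hjm⟩ := Finset.mem_filter.1 hj
        have hjpos := hpos j hjS
        have hlt : m - j < m := Nat.sub_lt hm hjpos
        have h1 := (IH _ hlt).1
        have hjle : j ≤ t := Finset.le_max' _ j hj
        have : (j : ℤ) ≤ (t : ℤ) := by exact_mod_cast hjle
        linarith
    · rw [hG m hm, dif_neg hne, dif_neg hne]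
      exact ⟨le_refl 0, le_refl 0⟩
  have ub : ∀ m : ℕ, Gs m ≤ (m : ℤ) := by
    intro m
    refine (key m).2.trans ?_
    by_cases hne : (S.filter (fun j => j ≤ m)).Nonempty
    · rw [dif_pos hne]
      have := Finset.max'_mem _ hne
      obtain ⟨_, h2⟩ := Finset.mem_filter.1 this
      exact_mod_cast h2
    · rw [dif_neg hne]
      exact_mod_cast Nat.zero_le m
  intro s hs
  have hsk : s ≤ k := hk ▸ Finset.le_max' S s hs
  have hn : 0 < s + k := Nat.add_pos_left (hpos s hs) k
  have hkmem : k ∈ S.filter (fun j => j ≤ s + k) :=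
    Finset.mem_filter.2 ⟨hkS, Nat.le_add_left k s⟩
  rw [hG _ hn, dif_pos ⟨k, hkmem⟩]
  apply le_antisymm
  · apply Finset.sup'_le
    intro j hj
    obtain ⟨hjS, _⟩ := Finset.mem_filter.1 hj
    have hjk : j ≤ k := hk ▸ Finset.le_max' S j hjS
    have heq : s + k - j = s + (k - j) := by omega
    have hm := move (s + (k - j)) s hs (Nat.le_add_right s (k - j))
    rw [Nat.add_sub_cancel_left] at hm
    have hub := ub (k - j)
    have hcast : ((k - j : ℕ) : ℤ) = (k : ℤ) - (j : ℤ) := by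
      omega
    rw [heq]
    have hjcast : (j : ℤ) ≤ (k : ℤ) := by exact_mod_cast hjk
    linarith
  · have hle := Finset.le_sup' (fun j : ℕ => (j : ℤ) - Gs (s + k - j)) hkmem
    rw [Nat.add_sub_cancel] at hle
    have := ub s
    linarith
end

section
/- Let S be a finite nonempty set of positive integers with k = max S ∈ S, and define G_s : ℕ → ℤ by G_s(0) = 0 and G_s(n) = max_{j ∈ S, j ≤ n} (j - G_s(n - j)) for n > 0 (G_s(n) = 0 if no such j exists). Then for every s ∈ S and every i ∈ ℕ, G_s(s + 2ik) = s and G_s(s + (2i + 1)k) = k - s. -/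
theorem stmt_6 (S : Finset ℕ) (hS : S.Nonempty) (hpos : ∀ j ∈ S, 0 < j)
    (k : ℕ) (hk : k = S.max' hS)
    (Gs : ℕ → ℤ) (h0 : Gs 0 = 0)
    (hG : ∀ n : ℕ, 0 < n →
      Gs n = if h : (S.filter (fun j => j ≤ n)).Nonempty
        then (S.filter (fun j => j ≤ n)).sup' h (fun j => (j : ℤ) - Gs (n - j))
        else 0) (hkS : k ∈ S) :
    ∀ s ∈ S, ∀ i : ℕ, Gs (s + 2 * i * k) = (s : ℤ) ∧ Gs (s + (2 * i + 1) * k) = (k : ℤ) - (s : ℤ) := by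
  have hkpos : 0 < k := hpos k hkS
  have hmax : ∀ j ∈ S, j ≤ k := fun j hj => hk ▸ S.le_max' j hj
  -- lower bound from a single move
  have hge : ∀ m : ℕ, 0 < m → ∀ j ∈ S, j ≤ m → (j : ℤ) - Gs (m - j) ≤ Gs m := by
    intro m hm j hj hjm
    have hmem : j ∈ S.filter (fun j => j ≤ m) := Finset.mem_filter.2 ⟨hj, hjm⟩
    rw [hG m hm, dif_pos ⟨j, hmem⟩]
    exact Finset.le_sup' (fun j : ℕ => (j : ℤ) - Gs (m - j)) hmem
  -- upper bound from bounds on all moves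
  have hle : ∀ m : ℕ, 0 < m → ∀ c : ℤ, 0 ≤ c →
      (∀ j ∈ S, j ≤ m → (j : ℤ) - Gs (m - j) ≤ c) → Gs m ≤ c := by
    intro m hm c hc hall
    rw [hG m hm]
    split_ifs with hne
    · exact Finset.sup'_le _ _ fun j hj => by
        obtain ⟨h1, h2⟩ := Finset.mem_filter.1 hj
        exact hall j h1 h2
    · exact hc
  -- 0 ≤ Gs t, and Gs t is at most any bound on the legal moves from t
  have hLU : ∀ t : ℕ, 0 ≤ Gs t ∧ ∀ b : ℕ, (∀ j ∈ S, j ≤ t → j ≤ b) → Gs t ≤ (b : ℤ) := by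
    intro t
    induction t using Nat.strong_induction_on with
    | _ t IH =>
      rcases Nat.eq_zero_or_pos t with rfl | ht
      · refine ⟨by simp [h0], fun b _ => by simp [h0]⟩
      · constructor
        · by_cases hne : ∃ j ∈ S, j ≤ t
          · obtain ⟨j1, hj1S, hj1t⟩ := hne
            have hne' : (S.filter (fun j => j ≤ t)).Nonempty :=
              ⟨j1, Finset.mem_filter.2 ⟨hj1S, hj1t⟩⟩
            have hj0mem := (S.filter (fun j => j ≤ t)).max'_mem hne'
            set j0 := (S.filter (fun j => j ≤ t)).max' hne' with hj0def
            rw [Finset.mem_filter] at hj0mem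
            have hj0S := hj0mem.1
            have hj0t := hj0mem.2
            have hj0pos := hpos j0 hj0S
            have hlt : t - j0 < t := by omega
            have hb : Gs (t - j0) ≤ (j0 : ℤ) := by
              apply (IH _ hlt).2
              intro j hj hjle
              exact Finset.le_max' _ j (Finset.mem_filter.2 ⟨hj, by omega⟩)
            have h1 := hge t ht j0 hj0S hj0t
            omega
          · have hne' : ¬ (S.filter (fun j => j ≤ t)).Nonempty := by
              simpa [Finset.filter_nonempty_iff] using hne
            rw [hG t ht, dif_neg hne']
        · intro b hb
          apply hle t ht _ (by positivity)
          intro j hj hjm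
          have hjpos := hpos j hj
          have h1 := (IH (t - j) (by omega)).1
          have h2 := hb j hj hjm
          omega
  -- multiples of k
  have hmult : ∀ K : ℕ, (∃ i, K = i * k) → K = 0 ∨ (k ≤ K ∧ ∃ i, K - k = i * k) := by
    rintro K ⟨i, rfl⟩
    cases i with
    | zero => left; simp
    | succ n =>
      right
      have h1 : (n + 1) * k = n * k + k := by ring
      exact ⟨by omega, ⟨n, by omega⟩⟩
  -- main invariants by strong induction
  have main : ∀ m : ℕ,
      (∀ s ∈ S, ∀ K : ℕ, (∃ i, K = i * k) → s + 2 * K ≤ m →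
        2 * (s : ℤ) + 2 * K - m ≤ Gs m) ∧
      (∀ s ∈ S, ∀ K : ℕ, (∃ i, K = i * k) → s + 2 * K + k ≤ m →
        Gs m ≤ (m : ℤ) - 2 * s - 2 * K) ∧
      (∀ s ∈ S, ∀ K : ℕ, (∃ i, K = i * k) →
        (m = s + 2 * K → Gs m = (s : ℤ)) ∧ (m = s + 2 * K + k → Gs m = (k : ℤ) - s)) := by
    intro m
    induction m using Nat.strong_induction_on with
    | _ m IH =>
      have hI : ∀ s ∈ S, ∀ K : ℕ, (∃ i, K = i * k) → s + 2 * K ≤ m →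
          2 * (s : ℤ) + 2 * K - m ≤ Gs m := by
        intro s hs K hKm hm'
        have hspos := hpos s hs
        have hsk := hmax s hs
        rcases hmult K hKm with hK0 | ⟨hkK, hK'⟩
        · -- K = 0 : respond with move s
          have hm : 0 < m := by omega
          have h1 := hge m hm s hs (by omega)
          have h2 : Gs (m - s) ≤ ((m - s : ℕ) : ℤ) :=
            (hLU (m - s)).2 (m - s) (fun j _ h => h)
          omega
        · -- K ≥ k : respond with move k, use (III) at m - k
          have hm : 0 < m := by omega
          have h1 := hge m hm k hkS (by omega)
          have h3 := (IH (m - k) (by omega)).2.1 s hs (K - k) hK' (by omega)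
          omega
      refine ⟨hI, ?_, ?_⟩
      · -- (III)
        intro s hs K hKm hm'
        have hspos := hpos s hs
        have hsk := hmax s hs
        have hm : 0 < m := by omega
        apply hle m hm _ (by
          have : (s : ℤ) ≤ k := by exact_mod_cast hsk
          omega)
        intro j hj hjm
        have hjk := hmax j hj
        have hjpos := hpos j hj
        have h4 := (IH (m - j) (by omega)).1 s hs K hKm (by omega)
        omega
      · -- (V) exact values
        intro s hs K hKm
        have hspos := hpos s hs
        have hsk := hmax s hs
        constructor
        · -- even point: m = s + 2K
          intro hmeq
          have hm : 0 < m := by omega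
          -- value of Gs at 2K
          have h2K : Gs (m - s) = 0 := by
            have hms : m - s = 2 * K := by omega
            rcases hmult K hKm with hK0 | ⟨hkK, hK'⟩
            · rw [hms, hK0, h0]
            · have := ((IH (2 * K) (by omega)).2.2 k hkS (K - k) hK').2 (by omega)
              rw [hms, this]; ring
          have hlow := hge m hm s hs (by omega)
          rw [h2K] at hlow
          have hupp : Gs m ≤ (s : ℤ) := by
            apply hle m hm _ (by positivity)
            intro j hj hjm
            have hjk := hmax j hj
            have hjpos := hpos j hj
            rcases hmult K hKm with hK0 | ⟨hkK, hK'⟩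
            · -- m = s, all moves j ≤ s
              have := (hLU (m - j)).1
              omega
            · have h4 := (IH (m - j) (by omega)).1 k hkS (K - k) hK' (by omega)
              omega
          omega
        · -- odd point: m = s + 2K + k
          intro hmeq
          have hm : 0 < m := by omega
          have hval : Gs (m - k) = (s : ℤ) := by
            have := ((IH (m - k) (by omega)).2.2 s hs K hKm).1 (by omega)
            exact this
          have hlow := hge m hm k hkS (by omega)
          rw [hval] at hlow
          have hupp : Gs m ≤ (k : ℤ) - s := by
            apply hle m hm _ (by
              have : (s : ℤ) ≤ k := by exact_mod_cast hsk
              omega)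
            intro j hj hjm
            have hjk := hmax j hj
            have hjpos := hpos j hj
            have h4 := (IH (m - j) (by omega)).1 s hs K hKm (by omega)
            omega
          omega
  -- conclude
  intro s hs i
  constructor
  · have := ((main (s + 2 * i * k)).2.2 s hs (i * k) ⟨i, rfl⟩).1 (by ring)
    exact this
  · have := ((main (s + (2 * i + 1) * k)).2.2 s hs (i * k) ⟨i, rfl⟩).2 (by ring)
    exact this
end

section
/- Let S be a finite nonempty set of positive integers with k = max S ∈ S, and define G_s : ℕ → ℤ by G_s(0) = 0 and G_s(n) = max_{j ∈ S, j ≤ n} (j - G_s(n - j)) for n > 0 (G_s(n) = 0 if no such j exists). Then for every s ∈ S and every i ≥ 1, G_s(s + 2ik) = k - G_s(s + (2i - 1)k). -/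
theorem stmt_7 (S : Finset ℕ) (hS : S.Nonempty) (hpos : ∀ j ∈ S, 0 < j)
    (k : ℕ) (hk : k = S.max' hS)
    (Gs : ℕ → ℤ) (h0 : Gs 0 = 0)
    (hG : ∀ n : ℕ, 0 < n →
      Gs n = if h : (S.filter (fun j => j ≤ n)).Nonempty
        then (S.filter (fun j => j ≤ n)).sup' h (fun j => (j : ℤ) - Gs (n - j))
        else 0) (hkS : k ∈ S) :
    ∀ s ∈ S, ∀ i : ℕ, 1 ≤ i → Gs (s + 2 * i * k) = (k : ℤ) - Gs (s + (2 * i - 1) * k) := by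
  have hk0 : 0 < k := by rw [hk]; exact hpos _ (S.max'_mem hS)
  have hsk : ∀ j ∈ S, j ≤ k := by intro j hj; rw [hk]; exact S.le_max' j hj
  set M : ℕ → ℕ := fun n => (S.filter (fun j => j ≤ n)).sup id with hM
  set v : ℕ → ℕ → ℤ := fun s m => if m % 2 = 0 then (s : ℤ) else (k : ℤ) - s with hv
  have hMle : ∀ x : ℕ, M x ≤ x := by
    intro x
    exact Finset.sup_le fun j hj => (Finset.mem_filter.mp hj).2
  have hvflip : ∀ s m, v s (m + 1) = (k : ℤ) - v s m := by
    intro s m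
    rcases Nat.mod_two_eq_zero_or_one m with h | h <;>
      · have h' : (m + 1) % 2 = 1 - m % 2 := by omega
        simp [hv, h, h'] <;> ring
  have key : ∀ n : ℕ, (0 ≤ Gs n ∧ Gs n ≤ (M n : ℤ)) ∧
      (∀ s ∈ S, ∀ m d : ℕ, n = s + m * k + d → d < k →
        v s m - d ≤ Gs n ∧ Gs n ≤ v s m + d) := by
    intro n
    induction n using Nat.strong_induction_on with
    | _ n ih =>
    have part1 : 0 ≤ Gs n ∧ Gs n ≤ (M n : ℤ) := by
      rcases Nat.eq_zero_or_pos n with rfl | hn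
      · exact ⟨le_of_eq h0.symm, by rw [h0]; positivity⟩
      · rw [hG n hn]
        by_cases hne : (S.filter (fun j => j ≤ n)).Nonempty
        · rw [dif_pos hne]
          constructor
          · set j0 := (S.filter (fun j => j ≤ n)).max' hne with hj0
            have hj0mem : j0 ∈ S.filter (fun j => j ≤ n) := Finset.max'_mem _ hne
            have hj0S : j0 ∈ S := (Finset.mem_filter.mp hj0mem).1
            have hj0n : j0 ≤ n := (Finset.mem_filter.mp hj0mem).2
            have hj0pos : 0 < j0 := hpos _ hj0S
            have hlt : n - j0 < n := by omega
            have hup : Gs (n - j0) ≤ (M (n - j0) : ℤ) := (ih _ hlt).1.2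
            have hMj0 : M (n - j0) ≤ j0 := by
              apply Finset.sup_le
              intro j hj
              have h1 := Finset.mem_filter.mp hj
              exact Finset.le_max' _ j (Finset.mem_filter.mpr ⟨h1.1, by omega⟩)
            have hle : (j0 : ℤ) - Gs (n - j0) ≤
                (S.filter (fun j => j ≤ n)).sup' hne (fun j => (j : ℤ) - Gs (n - j)) :=
              Finset.le_sup' (f := fun (j : ℕ) => (j : ℤ) - Gs (n - j)) hj0mem
            have hc : ((M (n - j0) : ℕ) : ℤ) ≤ (j0 : ℤ) := by exact_mod_cast hMj0
            linarith
          · apply Finset.sup'_le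
            intro j hj
            have h1 := Finset.mem_filter.mp hj
            have hjpos : 0 < j := hpos _ h1.1
            have hlt : n - j < n := by omega
            have h2 : 0 ≤ Gs (n - j) := (ih _ hlt).1.1
            have h3 : j ≤ M n := Finset.le_sup (f := id) hj
            have h4 : (j : ℤ) ≤ (M n : ℤ) := by exact_mod_cast h3
            linarith
        · rw [dif_neg hne]
          exact ⟨le_refl 0, by positivity⟩
    refine ⟨part1, ?_⟩
    intro s hs m d hn hd
    have hs0 : 0 < s := hpos _ hs
    have hssk : s ≤ k := hsk _ hs
    have hv0 : 0 ≤ v s m ∧ v s m ≤ (k : ℤ) := by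
      have h1 : (0 : ℤ) ≤ s := by positivity
      have h2 : (s : ℤ) ≤ k := by exact_mod_cast hssk
      simp only [hv]
      split <;> constructor <;> linarith
    cases m with
    | zero =>
      have hn' : n = s + d := by simpa using hn
      subst hn'
      have hv00 : v s 0 = (s : ℤ) := by simp [hv]
      constructor
      · have hn0 : 0 < s + d := by omega
        rw [hG _ hn0]
        have hsmem : s ∈ S.filter (fun j => j ≤ s + d) :=
          Finset.mem_filter.mpr ⟨hs, by omega⟩
        have hne : (S.filter (fun j => j ≤ s + d)).Nonempty := ⟨s, hsmem⟩
        rw [dif_pos hne]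
        have hle : (s : ℤ) - Gs (s + d - s) ≤
            (S.filter (fun j => j ≤ s + d)).sup' hne (fun j => (j : ℤ) - Gs (s + d - j)) :=
          Finset.le_sup' (f := fun (j : ℕ) => (j : ℤ) - Gs (s + d - j)) hsmem
        have hsd : s + d - s = d := by omega
        rw [hsd] at hle
        have hdle : Gs d ≤ (M d : ℤ) := (ih d (by omega)).1.2
        have hMd : ((M d : ℕ) : ℤ) ≤ (d : ℤ) := by exact_mod_cast hMle d
        rw [hv00]
        linarith
      · rw [hv00]
        have h1 : Gs (s + d) ≤ (M (s + d) : ℤ) := part1.2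
        have h2 : ((M (s + d) : ℕ) : ℤ) ≤ (s : ℤ) + d := by
          have := hMle (s + d); push_cast; exact_mod_cast this
        linarith
    | succ m' =>
      have hflip : v s (m' + 1) = (k : ℤ) - v s m' := hvflip s m'
      obtain ⟨a, ha⟩ : ∃ a, m' * k = a := ⟨_, rfl⟩
      have hm : n = s + a + d + k := by rw [hn, ← ha]; ring
      have hkn : k ≤ n := by omega
      have hn0 : 0 < n := by omega
      have hkmem : k ∈ S.filter (fun j => j ≤ n) := Finset.mem_filter.mpr ⟨hkS, hkn⟩
      have hne : (S.filter (fun j => j ≤ n)).Nonempty := ⟨k, hkmem⟩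
      constructor
      · rw [hG n hn0, dif_pos hne]
        have hle : (k : ℤ) - Gs (n - k) ≤
            (S.filter (fun j => j ≤ n)).sup' hne (fun j => (j : ℤ) - Gs (n - j)) :=
          Finset.le_sup' (f := fun (j : ℕ) => (j : ℤ) - Gs (n - j)) hkmem
        have hrep : n - k = s + a + d := by omega
        rw [← ha] at hrep
        have hub := ((ih (n - k) (by omega)).2 s hs m' d hrep hd).2
        rw [hflip]
        linarith
      · rw [hG n hn0, dif_pos hne]
        apply Finset.sup'_le
        intro j hj
        obtain ⟨hjS, hjn⟩ := Finset.mem_filter.mp hj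
        have hj0 : 0 < j := hpos _ hjS
        have hjk : j ≤ k := hsk _ hjS
        by_cases hjd : j ≤ d
        · have hrep : n - j = s + (m' + 1) * k + (d - j) := by
            have : n - j = s + a + k + (d - j) := by omega
            rw [this, ← ha]; ring
          have hlb := ((ih (n - j) (by omega)).2 s hs (m' + 1) (d - j) hrep (by omega)).1
          have hcast : ((d - j : ℕ) : ℤ) = (d : ℤ) - j := by
            push_cast [hjd]; ring
          rw [hcast] at hlb
          have h0v : 0 ≤ v s (m' + 1) := by
            have h1 : (0 : ℤ) ≤ s := by positivity
            have h2 : (s : ℤ) ≤ k := by exact_mod_cast hssk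
            simp only [hv]; split <;> linarith
          linarith
        · have hrep : n - j = s + m' * k + (k + d - j) := by
            have : n - j = s + a + (k + d - j) := by omega
            rw [this, ← ha]
          have hlb := ((ih (n - j) (by omega)).2 s hs m' (k + d - j) hrep (by omega)).1
          have hcast : ((k + d - j : ℕ) : ℤ) = (k : ℤ) + d - j := by
            have hjkd : j ≤ k + d := by omega
            push_cast [hjkd]; ring
          rw [hcast] at hlb
          rw [hflip]
          linarith
  intro s hs i hi
  have h2 := (key (s + 2 * i * k)).2 s hs (2 * i) 0 (by ring) hk0
  have h1 := (key (s + (2 * i - 1) * k)).2 s hs (2 * i - 1) 0 (by ring) hk0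
  have he : (2 * i) % 2 = 0 := by omega
  have ho : (2 * i - 1) % 2 = 1 := by omega
  simp only [hv, he, ho, Nat.cast_zero, sub_zero, add_zero, if_true, if_false,
    reduceIte] at h1 h2
  norm_num at h1 h2
  obtain ⟨h2a, h2b⟩ := h2
  obtain ⟨h1a, h1b⟩ := h1
  linarith
end

section
/- Define G_s : ℕ → ℤ by G_s(0) = 0 and, for n > 0, G_s(n) = max over j ∈ {4,5} with j ≤ n of (j - G_s(n - j)), with G_s(n) = 0 if no such j exists. Then 4 - G_s(13 - 4) > 5 - G_s(13 - 5); that is, in the subtraction game with set {4,5} and heap 13, removing 4 beans is strictly better than greedily removing 5 beans. -/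
theorem stmt_9 (Gs : ℕ → ℤ) (h0 : Gs 0 = 0)
    (hG : ∀ n : ℕ, 0 < n →
      Gs n = if h : (({4, 5} : Finset ℕ).filter (fun j => j ≤ n)).Nonempty
        then (({4, 5} : Finset ℕ).filter (fun j => j ≤ n)).sup' h (fun j => (j : ℤ) - Gs (n - j))
        else 0) :
    (4 : ℤ) - Gs (13 - 4) > (5 : ℤ) - Gs (13 - 5) := by
  have h1 : Gs 1 = 0 := by
    have h := hG 1 one_pos
    rw [show (({4, 5} : Finset ℕ).filter (fun j => j ≤ 1)) = ∅ from by decide] at h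
    simpa using h
  have h3 : Gs 3 = 0 := by
    have h := hG 3 (by norm_num)
    rw [show (({4, 5} : Finset ℕ).filter (fun j => j ≤ 3)) = ∅ from by decide] at h
    simpa using h
  have h4 : Gs 4 = 4 := by
    have h := hG 4 (by norm_num)
    rw [show (({4, 5} : Finset ℕ).filter (fun j => j ≤ 4)) = {4} from by decide] at h
    simp [Finset.sup'_singleton, h0] at h
    omega
  have h5 : Gs 5 = 5 := by
    have h := hG 5 (by norm_num)
    rw [show (({4, 5} : Finset ℕ).filter (fun j => j ≤ 5)) = {4, 5} from by decide] at h
    simp [Finset.sup'_insert, Finset.sup'_singleton, h0, h1] at h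
    omega
  have h8 : Gs 8 = 5 := by
    have h := hG 8 (by norm_num)
    rw [show (({4, 5} : Finset ℕ).filter (fun j => j ≤ 8)) = {4, 5} from by decide] at h
    simp [Finset.sup'_insert, Finset.sup'_singleton, h4, h3] at h
    omega
  have h9 : Gs 9 = 1 := by
    have h := hG 9 (by norm_num)
    rw [show (({4, 5} : Finset ℕ).filter (fun j => j ≤ 9)) = {4, 5} from by decide] at h
    simp [Finset.sup'_insert, Finset.sup'_singleton, h4, h5] at h
    omega
  norm_num [h8, h9]
end

section
/- Let S be a finite nonempty set of positive integers and let p : S → ℤ be any score function. Define G_s : ℕ → ℤ by G_s(0) = 0 and, for n > 0, G_s(n) = max over j ∈ S with j ≤ n of (p(j) - G_s(n - j)) (with G_s(n) = 0 if no j ∈ S satisfies j ≤ n). Then G_s is eventually periodic: there exist N ∈ ℕ and a period t ≥ 1 such that G_s(n + t) = G_s(n) for all n ≥ N. -/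
theorem stmt_11 (S : Finset ℕ) (hS : S.Nonempty) (hpos : ∀ j ∈ S, 0 < j) (p : ℕ → ℤ)
    (Gs : ℕ → ℤ) (h0 : Gs 0 = 0)
    (hG : ∀ n : ℕ, 0 < n →
      Gs n = if h : (S.filter (fun j => j ≤ n)).Nonempty
        then (S.filter (fun j => j ≤ n)).sup' h (fun j => p j - Gs (n - j))
        else 0) :
    ∃ N t : ℕ, 1 ≤ t ∧ ∀ n : ℕ, N ≤ n → Gs (n + t) = Gs n := by
  classical
  set K := S.sup id with hKdef
  obtain ⟨a, haS⟩ := hS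
  have hS' : S.Nonempty := ⟨a, haS⟩
  have hjK : ∀ j ∈ S, j ≤ K := fun j hj => Finset.le_sup (f := id) hj
  have hK1 : 1 ≤ K := le_trans (hpos a haS) (hjK a haS)
  -- the recursion gives a lower bound for each move
  have hstep : ∀ n, 0 < n → ∀ j ∈ S, j ≤ n → p j - Gs (n - j) ≤ Gs n := by
    intro n hn j hj hjn
    have hmem : j ∈ S.filter (fun j => j ≤ n) := Finset.mem_filter.2 ⟨hj, hjn⟩
    have hne : (S.filter (fun j => j ≤ n)).Nonempty := ⟨j, hmem⟩
    rw [hG n hn, dif_pos hne]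
    exact Finset.le_sup' (fun j => p j - Gs (n - j)) hmem
  -- for n ≥ K, the filter is all of S
  have hGS : ∀ n, K ≤ n → Gs n = S.sup' hS' (fun j => p j - Gs (n - j)) := by
    intro n hn
    have hfn : S.filter (fun j => j ≤ n) = S :=
      Finset.filter_true_of_mem fun j hj => le_trans (hjK j hj) hn
    have hne : (S.filter (fun j => j ≤ n)).Nonempty := by
      rw [hfn]; exact hS'
    rw [hG n (by omega), dif_pos hne]
    exact Finset.sup'_congr (f := fun j => p j - Gs (n - j)) (g := fun j => p j - Gs (n - j)) hne hfn (fun _ _ => rfl)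
  -- maximizer
  have hmax : ∀ n, K ≤ n → ∃ j ∈ S, Gs n = p j - Gs (n - j) := by
    intro n hn
    obtain ⟨j, hj, hje⟩ := Finset.exists_mem_eq_sup' hS' (fun j => p j - Gs (n - j))
    exact ⟨j, hj, by rw [hGS n hn, hje]⟩
  -- upper bound
  have hr2K : (Finset.range (2*K)).Nonempty := ⟨0, Finset.mem_range.2 (by omega)⟩
  set U := (Finset.range (2*K)).sup' hr2K Gs with hUdef
  have hU : ∀ n, Gs n ≤ U := by
    intro n
    induction n using Nat.strong_induction_on with
    | _ n ih =>
      by_cases hn : n < 2*K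
      · exact Finset.le_sup' Gs (Finset.mem_range.2 hn)
      · push_neg at hn
        obtain ⟨j, hj, hje⟩ := hmax n (by omega)
        have hj1 : 1 ≤ j := hpos j hj
        have hjK' := hjK j hj
        have h2 : p j - Gs (n - j - j) ≤ Gs (n - j) :=
          hstep (n - j) (by omega) j hj (by omega)
        have h3 : Gs n ≤ Gs (n - j - j) := by omega
        exact le_trans h3 (ih (n - j - j) (by omega))
  -- lower bound
  set L := min 0 (S.inf' hS' p - U) with hLdef
  have hL : ∀ n, L ≤ Gs n := by
    intro n
    rcases Nat.eq_zero_or_pos n with h | h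
    · rw [h, h0]; exact min_le_left _ _
    · rw [hG n h]
      split_ifs with hne
      · obtain ⟨j, hjmem⟩ := hne
        have hj := (Finset.mem_filter.1 hjmem).1
        have h1 : S.inf' hS' p ≤ p j := Finset.inf'_le p hj
        have h2 := hU (n - j)
        calc L ≤ S.inf' hS' p - U := min_le_right _ _
          _ ≤ p j - Gs (n - j) := by omega
          _ ≤ _ := Finset.le_sup' (fun j => p j - Gs (n - j)) hjmem
      · exact min_le_left _ _
  -- periodicity from a repeated window
  have key : ∀ x y : ℕ, x < y →
      (∀ i : Fin K, Gs (K + x + i.1) = Gs (K + y + i.1)) →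
      ∃ N t : ℕ, 1 ≤ t ∧ ∀ n : ℕ, N ≤ n → Gs (n + t) = Gs n := by
    intro x y hxy hw
    refine ⟨K + x, y - x, by omega, ?_⟩
    intro n hn
    induction n using Nat.strong_induction_on with
    | _ n ih =>
      by_cases hcase : n < K + x + K
      · have hi : n - (K + x) < K := by omega
        have hwi := hw ⟨n - (K + x), hi⟩
        have e1 : K + x + (n - (K + x)) = n := by omega
        have e2 : K + y + (n - (K + x)) = n + (y - x) := by omega
        rw [e1, e2] at hwi
        exact hwi.symm
      · push_neg at hcase
        have h1 : K ≤ n := by omega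
        have h2 : K ≤ n + (y - x) := by omega
        rw [hGS n h1, hGS _ h2]
        apply Finset.sup'_congr hS' rfl (g := fun j => p j - Gs (n - j))
        intro j hj
        have hjK' := hjK j hj
        have hj1 := hpos j hj
        have e3 : n + (y - x) - j = (n - j) + (y - x) := by omega
        rw [e3, ih (n - j) (by omega) (by omega)]
  -- pigeonhole on windows
  haveI : Finite (Set.Icc L U) := (Set.finite_Icc L U).to_subtype
  obtain ⟨x, y, hxy, hfe⟩ := Finite.exists_ne_map_eq_of_infinite
    (fun n : ℕ => fun i : Fin K => (⟨Gs (K + n + i.1), hL _, hU _⟩ : Set.Icc L U))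
  rcases lt_or_gt_of_ne hxy with h | h
  · exact key x y h (fun i => Subtype.ext_iff.mp (congrFun hfe i))
  · exact key y x h (fun i => Subtype.ext_iff.mp (congrFun hfe.symm i))
end

section
/- Let S be a finite nonempty set of positive integers and p : S → ℤ a score function with M = max_{j∈S} |p(j)|. Define G_s : ℕ → ℤ by G_s(0) = 0 and G_s(n) = max_{j ∈ S, j ≤ n} (p(j) - G_s(n - j)) for n > 0 (G_s(n) = 0 if no such j exists). Then |G_s(n)| ≤ 2M for all n ∈ ℕ. -/
theorem stmt_12 (S : Finset ℕ) (hS : S.Nonempty) (hpos : ∀ j ∈ S, 0 < j) (p : ℕ → ℤ)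
    (Gs : ℕ → ℤ) (h0 : Gs 0 = 0)
    (hG : ∀ n : ℕ, 0 < n →
      Gs n = if h : (S.filter (fun j => j ≤ n)).Nonempty
        then (S.filter (fun j => j ≤ n)).sup' h (fun j => p j - Gs (n - j))
        else 0) (M : ℤ) (hM : M = S.sup' hS (fun j => |p j|)) :
    ∀ n : ℕ, |Gs n| ≤ 2 * M := by
  have habs : ∀ j ∈ S, |p j| ≤ M := by
    intro j hj
    rw [hM]
    exact Finset.le_sup' (fun j => |p j|) hj
  have hMnn : 0 ≤ M := by
    obtain ⟨j, hj⟩ := hS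
    exact le_trans (abs_nonneg _) (habs j hj)
  -- lower bound: -M ≤ Gs n for all n
  have lower : ∀ n : ℕ, -M ≤ Gs n := by
    intro n
    induction n using Nat.strong_induction_on with
    | _ n ih =>
      rcases Nat.eq_zero_or_pos n with rfl | hn
      · rw [h0]; linarith
      by_cases hA : (S.filter (fun j => j ≤ n)).Nonempty
      · by_contra hcon
        push_neg at hcon
        have hsup := hG n hn
        rw [dif_pos hA] at hsup
        -- every legal move j has Gs (n - j) > p j + M
        have hbig : ∀ j ∈ S.filter (fun j => j ≤ n), p j + M < Gs (n - j) := by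
          intro j hj
          have := Finset.le_sup' (fun j => p j - Gs (n - j)) hj
          rw [← hsup] at this
          linarith
        -- pick j1 with maximal p value among legal moves
        obtain ⟨j1, hj1, hj1max⟩ := Finset.exists_max_image _ p hA
        have hj1S := (Finset.mem_filter.mp hj1).1
        have hj1n : j1 ≤ n := (Finset.mem_filter.mp hj1).2
        have hpj1 : |p j1| ≤ M := habs j1 hj1S
        have hm1pos : 0 < Gs (n - j1) := by
          have := hbig j1 hj1
          have : -|p j1| ≤ p j1 := neg_abs_le _
          have := hbig j1 hj1
          linarith [neg_abs_le (p j1)]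
        set m1 := n - j1 with hm1
        have hm1ne : 0 < m1 := by
          rcases Nat.eq_zero_or_pos m1 with h | h
          · rw [h, h0] at hm1pos; exact absurd hm1pos (lt_irrefl 0)
          · exact h
        have hB : (S.filter (fun j => j ≤ m1)).Nonempty := by
          by_contra hB
          have := hG m1 hm1ne
          rw [dif_neg hB] at this
          rw [this] at hm1pos
          exact absurd hm1pos (lt_irrefl 0)
        have hsup1 := hG m1 hm1ne
        rw [dif_pos hB] at hsup1
        obtain ⟨j2, hj2, hj2eq⟩ := Finset.exists_mem_eq_sup' hB (fun j => p j - Gs (m1 - j))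
        have hj2S := (Finset.mem_filter.mp hj2).1
        have hj2m1 : j2 ≤ m1 := (Finset.mem_filter.mp hj2).2
        have hj2A : j2 ∈ S.filter (fun j => j ≤ n) := by
          refine Finset.mem_filter.mpr ⟨hj2S, ?_⟩
          exact le_trans hj2m1 (Nat.sub_le n j1)
        have hple : p j2 ≤ p j1 := hj1max j2 hj2A
        have hGm1 : Gs m1 = p j2 - Gs (m1 - j2) := by
          rw [hsup1, hj2eq]
        have hb1 := hbig j1 hj1
        rw [← hm1] at hb1
        -- Gs (m1 - j2) < p j2 - p j1 - M ≤ -M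
        have hsmall : Gs (m1 - j2) < -M := by
          rw [hGm1] at hb1
          linarith
        have hlt : m1 - j2 < n := by
          have : m1 < n := by
            have := hpos j1 hj1S
            omega
          omega
        exact absurd (ih _ hlt) (not_le.mpr hsmall)
      · have := hG n hn
        rw [dif_neg hA] at this
        rw [this]; linarith
  intro n
  rw [abs_le]
  constructor
  · linarith [lower n]
  · rcases Nat.eq_zero_or_pos n with rfl | hn
    · rw [h0]; linarith
    by_cases hA : (S.filter (fun j => j ≤ n)).Nonempty
    · have hsup := hG n hn
      rw [dif_pos hA] at hsup
      rw [hsup]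
      apply Finset.sup'_le
      intro j hj
      have hjS := (Finset.mem_filter.mp hj).1
      have h1 : p j ≤ M := le_trans (le_abs_self _) (habs j hjS)
      have h2 := lower (n - j)
      linarith
    · have := hG n hn
      rw [dif_neg hA] at this
      rw [this]; linarith
end
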